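/- There exists a real positive semidefinite $n \times n$ matrix $M$ (namely $M = \tilde{M}^T\tilde{M}$ with $\tilde{M}$ as constructed from the Vandermonde vectors) such that for every $m \times n$ real matrix $B$ with fewer than $n^2/4$ non-zero entries, $M \neq B^T B$. -/

import Mathlib

open Polynomial Finset Matrix

lemma support_X_pow_mul_card (k : ℕ) (q : ℝ[X]) :
    (X ^ k * q).support.card = q.support.card := by
  have himg : (X ^ k * q).support = q.support.image (· + k) := by
    ext d
    simp only [Polynomial.mem_support_iff, Finset.mem_image]
    constructor
    · intro hd
      rcases le_or_gt k d with h | h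
      · obtain ⟨e, rfl⟩ : ∃ e, d = e + k := ⟨d - k, by omega⟩
        rw [Polynomial.coeff_X_pow_mul] at hd
        exact ⟨e, hd, rfl⟩
      · exact absurd (Polynomial.coeff_X_pow_mul' q k d ▸ (if_neg (by omega))) (by
          simp_all [Polynomial.coeff_X_pow_mul' q k d, if_neg (not_le.mpr h)])
    · rintro ⟨e, he, rfl⟩
      rwa [Polynomial.coeff_X_pow_mul]
  rw [himg, Finset.card_image_of_injective _ (add_left_injective k)]

lemma descartes (p : ℝ[X]) (hp : p ≠ 0) (S : Finset ℝ) (hpos : ∀ x ∈ S, 0 < x)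
    (hroot : ∀ x ∈ S, p.eval x = 0) : S.card < p.support.card := by
  generalize hcard : p.support.card = c
  induction c using Nat.strong_induction_on generalizing p S with
  | _ c ih =>
  subst hcard
  have hcardpos : 0 < p.support.card :=
    Finset.card_pos.mpr (Polynomial.support_nonempty.mpr hp)
  rcases S.eq_empty_or_nonempty with rfl | ⟨a, ha⟩
  · simpa using hcardpos
  -- strip powers of X
  set k := p.natTrailingDegree with hk
  obtain ⟨q, hq⟩ : X ^ k ∣ p := by
    rw [Polynomial.X_pow_dvd_iff]
    exact fun d hd => Polynomial.coeff_eq_zero_of_lt_natTrailingDegree hd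
  have hq0 : q.coeff 0 ≠ 0 := by
    have h1 : p.coeff k ≠ 0 := by
      rw [hk]
      exact Polynomial.trailingCoeff_nonzero_iff_nonzero.mpr hp
    have h2 : (X ^ k * q).coeff (0 + k) = q.coeff 0 := Polynomial.coeff_X_pow_mul q k 0
    rw [hq] at h1
    rw [zero_add] at h2
    rw [h2] at h1; exact h1
    
  have hqne : q ≠ 0 := fun h => hq0 (by simp [h])
  have hevalq : ∀ x ∈ S, q.eval x = 0 := by
    intro x hx
    have := hroot x hx
    rw [hq, Polynomial.eval_mul, Polynomial.eval_pow, Polynomial.eval_X] at this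
    rcases mul_eq_zero.mp this with h | h
    · exact absurd h (pow_ne_zero _ (ne_of_gt (hpos x hx)))
    · exact h
  have hsupp : q.support.card = p.support.card := by
    rw [hq, support_X_pow_mul_card]
  set q' := derivative q with hq'
  have hq'ne : q' ≠ 0 := by
    intro h
    have := Polynomial.eq_C_of_derivative_eq_zero h
    have h0 := hevalq a ha
    rw [this] at h0
    simp only [Polynomial.eval_C] at h0
    rw [this] at hq0
    simp [h0] at hq0
  -- support of derivative
  have hsupp' : q'.support.card < p.support.card := by
    have h1 : q'.support.card ≤ (q.support.erase 0).card := by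
      apply Finset.card_le_card_of_injOn (· + 1)
      · intro d hd
        rw [Finset.mem_coe, Polynomial.mem_support_iff, Polynomial.coeff_derivative] at hd
        have : q.coeff (d + 1) ≠ 0 := fun h => hd (by simp [h])
        show d + 1 ∈ (↑(q.support.erase 0) : Set ℕ)
        rw [Finset.mem_coe, Finset.mem_erase]
        exact ⟨by omega, Polynomial.mem_support_iff.mpr this⟩
      · intro x _ y _ h; simpa using h
    have h2 : (q.support.erase 0).card = q.support.card - 1 :=
      Finset.card_erase_of_mem (Polynomial.mem_support_iff.mpr hq0)
    have h3 : 0 < q.support.card := Finset.card_pos.mpr (Polynomial.support_nonempty.mpr hqne)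
    omega
  -- positive roots of q'
  set T := q'.roots.toFinset.filter (fun x => 0 < x) with hT
  have hTpos : ∀ x ∈ T, 0 < x := fun x hx => (Finset.mem_filter.mp hx).2
  have hTroot : ∀ x ∈ T, q'.eval x = 0 := by
    intro x hx
    have := (Finset.mem_filter.mp hx).1
    rw [Multiset.mem_toFinset, Polynomial.mem_roots hq'ne] at this
    exact this
  have hST : S.card ≤ T.card + 1 := by
    apply Finset.card_le_of_interleaved
    intro x hx y hy hxy _
    obtain ⟨z, hz, hz'⟩ := exists_deriv_eq_zero hxy q.continuousOn
      ((hevalq x hx).trans (hevalq y hy).symm)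
    refine ⟨z, ?_, hz.1, hz.2⟩
    rw [hT, Finset.mem_filter, Multiset.mem_toFinset, Polynomial.mem_roots hq'ne]
    exact ⟨by rwa [Polynomial.IsRoot, ← q.deriv], lt_trans (hpos x hx) hz.1⟩
  have := ih q'.support.card hsupp' q' hq'ne T hTpos hTroot rfl
  omega

noncomputable def Pp (h : ℕ) : ℝ[X] := ∏ i ∈ Finset.range h, (X - C ((i : ℝ) + 1))

lemma Pp_monic (h : ℕ) : (Pp h).Monic :=
  monic_prod_of_monic _ _ fun i _ => monic_X_sub_C _

lemma Pp_natDegree (h : ℕ) : (Pp h).natDegree = h := by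
  rw [Pp, natDegree_prod _ _ (fun i _ => X_sub_C_ne_zero _)]
  rw [Finset.sum_congr rfl fun i _ => natDegree_X_sub_C _]
  simp

lemma Pp_root {h i : ℕ} (hi : i < h) : (Pp h).eval ((i : ℝ) + 1) = 0 := by
  rw [Pp, eval_prod]
  exact Finset.prod_eq_zero (Finset.mem_range.mpr hi) (by simp)

lemma Pp_coeff_top (h : ℕ) : (Pp h).coeff h = 1 := by
  have := (Pp_monic h).leadingCoeff
  rwa [Polynomial.leadingCoeff, Pp_natDegree] at this

lemma Pp_coeff_zero_of_gt {h d : ℕ} (hd : h < d) : (Pp h).coeff d = 0 :=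
  Polynomial.coeff_eq_zero_of_natDegree_lt (by rw [Pp_natDegree]; exact hd)

noncomputable def Mt (h n : ℕ) : Matrix (Fin h) (Fin n) ℝ :=
  fun j k => if (j : ℕ) ≤ (k : ℕ) then (Pp h).coeff ((k : ℕ) - (j : ℕ)) else 0

-- Vandermonde-type vector
def vx (n : ℕ) (x : ℝ) : Fin n → ℝ := fun k => x ^ (k : ℕ)

lemma Mt_mulVec (h : ℕ) (x : ℝ) (j : Fin h) :
    (Mt h (h + h) *ᵥ vx (h + h) x) j = x ^ (j : ℕ) * (Pp h).eval x := by
  classical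
  have hjh : (j : ℕ) < h := j.isLt
  have hdeg : (Pp h).natDegree < h + h - (j : ℕ) := by rw [Pp_natDegree]; omega
  calc (Mt h (h + h) *ᵥ vx (h + h) x) j
      = ∑ k ∈ Finset.range (h+h),
          (if (j : ℕ) ≤ k then (Pp h).coeff (k - (j : ℕ)) else 0) * x ^ k := by
        rw [Matrix.mulVec, dotProduct,
          ← Fin.sum_univ_eq_sum_range
            (fun k => (if (j : ℕ) ≤ k then (Pp h).coeff (k - (j : ℕ)) else 0) * x ^ k) (h+h)]
        rfl
    _ = ∑ k ∈ Finset.Ico (j : ℕ) (h+h),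
          (if (j : ℕ) ≤ k then (Pp h).coeff (k - (j : ℕ)) else 0) * x ^ k := by
        rw [Finset.range_eq_Ico,
          ← Finset.sum_Ico_consecutive _ (Nat.zero_le (j : ℕ)) (by omega)]
        have : ∀ k ∈ Finset.Ico 0 (j : ℕ),
            (if (j : ℕ) ≤ k then (Pp h).coeff (k - (j : ℕ)) else 0) * x ^ k = 0 := by
          intro k hk
          rw [Finset.mem_Ico] at hk
          rw [if_neg (by omega), zero_mul]
        rw [Finset.sum_eq_zero this, zero_add]
    _ = ∑ d ∈ Finset.range (h+h - (j : ℕ)), (Pp h).coeff d * x ^ ((j : ℕ) + d) := by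
        rw [Finset.sum_Ico_eq_sum_range]
        apply Finset.sum_congr rfl
        intro d _
        rw [if_pos (by omega)]
        congr 1
        congr 1
        omega
    _ = x ^ (j : ℕ) * (Pp h).eval x := by
        rw [Polynomial.eval_eq_sum_range' hdeg, Finset.mul_sum]
        apply Finset.sum_congr rfl
        intro d _
        rw [pow_add]
        ring

lemma Mt_rank (h : ℕ) : h ≤ (Mt h (h + h)).rank := by
  classical
  set A : Matrix (Fin h) (Fin h) ℝ :=
    fun j j' => Mt h (h + h) j ⟨(j' : ℕ) + h, by omega⟩ with hA
  have hAval : ∀ j j' : Fin h, A j j' = (Pp h).coeff ((j' : ℕ) + h - (j : ℕ)) := by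
    intro j j'
    rw [hA]
    simp only [Mt]
    rw [if_pos (by omega)]
  -- A is lower triangular with unit diagonal
  have htri : Aᵀ.BlockTriangular id := by
    intro j j' hlt
    rw [Matrix.transpose_apply, hAval]
    exact Pp_coeff_zero_of_gt (by simp only [id] at hlt; omega)
  have hdiag : ∀ j : Fin h, A j j = 1 := by
    intro j
    rw [hAval]
    have : (j : ℕ) + h - (j : ℕ) = h := by omega
    rw [this, Pp_coeff_top]
  have hdet : A.det = 1 := by
    rw [← Matrix.det_transpose, Matrix.det_of_upperTriangular htri]
    simp only [Matrix.transpose_apply]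
    rw [Finset.prod_congr rfl fun j _ => hdiag j]
    simp
  have hunit : IsUnit A := (Matrix.isUnit_iff_isUnit_det A).mpr (by rw [hdet]; exact isUnit_one)
  have hrankA : A.rank = h := by rw [Matrix.rank_of_isUnit A hunit, Fintype.card_fin]
  -- A = Mt * E
  set E : Matrix (Fin (h + h)) (Fin h) ℝ :=
    fun k j' => if k = (⟨(j' : ℕ) + h, by omega⟩ : Fin (h + h)) then 1 else 0 with hE
  have hAE : A = Mt h (h + h) * E := by
    ext j j'
    rw [Matrix.mul_apply]
    simp only [hE, mul_ite, mul_one, mul_zero]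
    rw [Finset.sum_ite_eq' Finset.univ _ (fun k => Mt h (h+h) j k)]
    simp [hA]
  calc h = A.rank := hrankA.symm
    _ ≤ (Mt h (h + h)).rank := hAE ▸ Matrix.rank_mul_le_left _ _

open Classical in
lemma rank_le_nonzero_rows {m n : ℕ} (B : Matrix (Fin m) (Fin n) ℝ) :
    B.rank ≤ (Finset.univ.filter (fun i => B i ≠ 0)).card := by
  classical
  set R := Finset.univ.filter (fun i => B i ≠ 0) with hR
  set r := R.card with hr
  set e := R.orderIsoOfFin hr.symm with he
  set F : Matrix (Fin m) (Fin r) ℝ := fun i t => if i = (e t : Fin m) then 1 else 0 with hF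
  set B' : Matrix (Fin r) (Fin n) ℝ := fun t k => B (e t : Fin m) k with hB'
  have hfact : B = F * B' := by
    ext i k
    rw [Matrix.mul_apply]
    simp only [hF, hB', ite_mul, one_mul, zero_mul]
    by_cases hi : i ∈ R
    · have : ∀ t : Fin r, (if i = (e t : Fin m) then B (e t : Fin m) k else 0)
          = if t = e.symm ⟨i, hi⟩ then B i k else 0 := by
        intro t
        by_cases ht : t = e.symm ⟨i, hi⟩
        · subst ht
          simp
        · rw [if_neg ?_, if_neg ht]
          intro hcontra
          apply ht
          have : e t = (⟨i, hi⟩ : {x // x ∈ R}) := Subtype.ext hcontra.symm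
          rw [← this]
          simp
      rw [Finset.sum_congr rfl fun t _ => this t, Finset.sum_ite_eq' Finset.univ _ (fun _ => B i k)]
      simp
    · have hrow : B i = 0 := by
        by_contra hne
        exact hi (Finset.mem_filter.mpr ⟨Finset.mem_univ i, hne⟩)
      have : ∀ t : Fin r, (if i = (e t : Fin m) then B (e t : Fin m) k else 0) = 0 := by
        intro t
        by_cases ht : i = (e t : Fin m)
        · rw [if_pos ht, ← ht]
          rw [show B i k = (B i) k from rfl, hrow]
          rfl
        · rw [if_neg ht]
      rw [Finset.sum_congr rfl fun t _ => this t, Finset.sum_const_zero]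
      rw [show B i k = (B i) k from rfl, hrow]
      rfl
  calc B.rank = (F * B').rank := by rw [← hfact]
    _ ≤ B'.rank := Matrix.rank_mul_le_right _ _
    _ ≤ r := by simpa using B'.rank_le_card_height

lemma quadform_eq {m n : ℕ} (A : Matrix (Fin m) (Fin n) ℝ) (v : Fin n → ℝ) :
    v ⬝ᵥ ((Aᵀ * A) *ᵥ v) = (A *ᵥ v) ⬝ᵥ (A *ᵥ v) := by
  rw [← Matrix.mulVec_mulVec, Matrix.dotProduct_mulVec, Matrix.vecMul_transpose]

theorem stmt7 (n : ℕ) (hn : Even n) :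
    ∃ M : Matrix (Fin n) (Fin n) ℝ, M.PosSemidef ∧
      ∀ (m : ℕ) (B : Matrix (Fin m) (Fin n) ℝ),
        4 * Set.ncard {p : Fin m × Fin n | B p.1 p.2 ≠ 0} < n ^ 2 →
        M ≠ Bᵀ * B := by
  classical
  obtain ⟨h, rfl⟩ := hn
  refine ⟨(Mt h (h + h))ᵀ * Mt h (h + h), ?_, ?_⟩
  · have := Matrix.posSemidef_conjTranspose_mul_self (Mt h (h + h))
    rwa [Matrix.conjTranspose_eq_transpose_of_trivial] at this
  intro m B hsp heq
  -- the h Vandermonde vectors are in the kernel of B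
  have hMtv : ∀ i < h, Mt h (h + h) *ᵥ vx (h + h) ((i : ℝ) + 1) = 0 := by
    intro i hi
    funext j
    rw [Mt_mulVec, Pp_root hi, mul_zero]
    rfl
  have hBv : ∀ i < h, B *ᵥ vx (h + h) ((i : ℝ) + 1) = 0 := by
    intro i hi
    have h1 : vx (h+h) ((i:ℝ)+1) ⬝ᵥ (((Mt h (h+h))ᵀ * Mt h (h+h)) *ᵥ vx (h+h) ((i:ℝ)+1)) = 0 := by
      rw [quadform_eq, hMtv i hi]
      simp
    rw [heq, quadform_eq, dotProduct_self_eq_zero] at h1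
    exact h1
  -- rank bound
  have hrank : h ≤ B.rank := by
    have h1 := Matrix.rank_transpose_mul_self (Mt h (h + h))
    have h2 := Matrix.rank_transpose_mul_self B
    rw [heq] at h1
    calc h ≤ (Mt h (h+h)).rank := Mt_rank h
      _ = B.rank := by rw [← h1, h2]
  -- counting
  set R := Finset.univ.filter (fun i => B i ≠ 0) with hR
  have hrankR : h ≤ R.card := le_trans hrank (rank_le_nonzero_rows B)
  set supp : Fin m → Finset (Fin (h+h)) := fun i => Finset.univ.filter (fun k => B i k ≠ 0)
    with hsupp
  have hncard : Set.ncard {p : Fin m × Fin (h+h) | B p.1 p.2 ≠ 0} = ∑ i, (supp i).card := by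
    have : {p : Fin m × Fin (h+h) | B p.1 p.2 ≠ 0}
        = ↑(Finset.univ.filter (fun p : Fin m × Fin (h+h) => B p.1 p.2 ≠ 0)) := by
      ext p; simp
    rw [this, Set.ncard_coe_finset, Finset.card_filter, Fintype.sum_prod_type]
    apply Finset.sum_congr rfl
    intro i _
    rw [hsupp, Finset.card_filter]
  -- there is a sparse nonzero row
  obtain ⟨i, hiR, hisparse⟩ : ∃ i ∈ R, (supp i).card < h := by
    by_contra hcon
    push_neg at hcon
    have htot : h * h ≤ ∑ i, (supp i).card := by
      calc h * h ≤ R.card * h := Nat.mul_le_mul_right h hrankR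
        _ = ∑ _i ∈ R, h := by rw [Finset.sum_const, smul_eq_mul]
        _ ≤ ∑ i ∈ R, (supp i).card := Finset.sum_le_sum fun i hi => hcon i hi
        _ ≤ ∑ i, (supp i).card := Finset.sum_le_sum_of_subset (Finset.subset_univ R)
    rw [hncard] at hsp
    nlinarith [hsp, htot]
  -- the row polynomial
  set f : ℝ[X] := ∑ k : Fin (h+h), Polynomial.monomial (k : ℕ) (B i k) with hf
  have hcoeff : ∀ d : Fin (h+h), f.coeff (d : ℕ) = B i d := by
    intro d
    rw [hf, Polynomial.finset_sum_coeff]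
    have : ∀ k : Fin (h+h), (Polynomial.monomial (k:ℕ) (B i k)).coeff (d:ℕ)
        = if k = d then B i k else 0 := by
      intro k
      rw [Polynomial.coeff_monomial]
      congr 1
      simp [Fin.val_inj]
    rw [Finset.sum_congr rfl fun k _ => this k, Finset.sum_ite_eq' Finset.univ _ (fun k => B i k)]
    simp
  have hfne : f ≠ 0 := by
    have : B i ≠ 0 := (Finset.mem_filter.mp hiR).2
    obtain ⟨k₀, hk₀⟩ : ∃ k₀, B i k₀ ≠ 0 := by
      by_contra hcon
      push_neg at hcon
      exact this (funext hcon)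
    intro hzero
    apply hk₀
    rw [← hcoeff k₀, hzero, Polynomial.coeff_zero]
  have hfsupp : f.support.card ≤ (supp i).card := by
    have hsub : f.support ⊆ (supp i).image Fin.val := by
      intro d hd
      rw [Polynomial.mem_support_iff] at hd
      by_cases hdlt : d < h + h
      · refine Finset.mem_image.mpr ⟨⟨d, hdlt⟩, ?_, rfl⟩
        rw [hsupp, Finset.mem_filter]
        refine ⟨Finset.mem_univ _, ?_⟩
        rwa [← hcoeff ⟨d, hdlt⟩]
      · exfalso
        apply hd
        rw [hf, Polynomial.finset_sum_coeff]
        apply Finset.sum_eq_zero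
        intro k _
        rw [Polynomial.coeff_monomial, if_neg (by omega)]
    calc f.support.card ≤ ((supp i).image Fin.val).card := Finset.card_le_card hsub
      _ ≤ (supp i).card := Finset.card_image_le
  have hfeval : ∀ x : ℝ, f.eval x = (B *ᵥ vx (h+h) x) i := by
    intro x
    rw [hf, Polynomial.eval_finset_sum]
    apply Finset.sum_congr rfl
    intro k _
    rw [Polynomial.eval_monomial]
    rfl
  -- the finset of roots
  set S : Finset ℝ := (Finset.range h).image (fun t : ℕ => (t : ℝ) + 1) with hS
  have hScard : S.card = h := by
    rw [hS, Finset.card_image_of_injective _ ?_, Finset.card_range]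
    intro a b hab
    simp only at hab
    have : (a : ℝ) = b := by linarith
    exact_mod_cast this
  have hmain := descartes f hfne S ?_ ?_
  · omega
  · intro x hx
    obtain ⟨t, _, rfl⟩ := Finset.mem_image.mp hx
    positivity
  · intro x hx
    obtain ⟨t, ht, rfl⟩ := Finset.mem_image.mp hx
    rw [hfeval, hBv t (Finset.mem_range.mp ht)]
    rfl
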